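/- Let Φ(η) := ∫_{−∞}^{η} (1/√(2π))·e^{−z²/2} dz be the standard normal CDF, let ε ∈ (0, 1/2), let a := Φ⁻¹(1−ε), let θ > 0, and define F(η) := η·(Φ(η) − (1−ε)) − ∫_{a²/2}^{η²/2} (1/√(2π))·e^{−z} dz − θ for η ≥ a. Then F(a) = −θ < 0, F(η) → +∞ as η → +∞, and there exists a unique η* ∈ [a, ∞) with F(η*) = 0; moreover η* > a, so the adjusted level ε′ := 1 − Φ(η*) satisfies 0 < ε′ < ε. -/

import Mathlib

open MeasureTheory intervalIntegral

/-- The standard normal cumulative distribution function. -/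
noncomputable def Phi (η : ℝ) : ℝ :=
  ∫ z in Set.Iic η, (1 / Real.sqrt (2 * Real.pi)) * Real.exp (-z ^ 2 / 2)

namespace Stmt9Aux

noncomputable def c : ℝ := 1 / Real.sqrt (2 * Real.pi)

noncomputable def φ (z : ℝ) : ℝ := c * Real.exp (-z ^ 2 / 2)

lemma c_pos : 0 < c := by
  have : 0 < Real.sqrt (2 * Real.pi) := Real.sqrt_pos.mpr (by positivity)
  exact one_div_pos.mpr this

lemma φ_pos (z : ℝ) : 0 < φ z := mul_pos c_pos (Real.exp_pos _)

lemma φ_cont : Continuous φ := by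
  unfold φ; fun_prop

lemma φ_integrable : Integrable φ := by
  have h := (integrable_exp_neg_mul_sq (show (0:ℝ) < 1/2 by norm_num)).const_mul c
  have he : φ = fun x : ℝ => c * Real.exp (-(1/2) * x ^ 2) := by
    funext z; unfold φ; congr 1; ring
  rw [he]; exact h

lemma φ_integral : ∫ z : ℝ, φ z = 1 := by
  unfold φ
  rw [MeasureTheory.integral_const_mul]
  have he : (fun z : ℝ => Real.exp (-z ^ 2 / 2)) = fun x : ℝ => Real.exp (-(1/2) * x ^ 2) := by
    funext z; congr 1; ring
  have h := integral_gaussian (1/2)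
  have h2 : ∫ z : ℝ, Real.exp (-z ^ 2 / 2) = Real.sqrt (2 * Real.pi) := by
    rw [he, h]; congr 1; rw [div_div_eq_mul_div]; ring_nf
  rw [h2]
  have hs : Real.sqrt (2 * Real.pi) ≠ 0 :=
    ne_of_gt (Real.sqrt_pos.mpr (by positivity))
  unfold c
  field_simp

lemma Phi_eq (x : ℝ) : Phi x = Phi 0 + ∫ t in (0:ℝ)..x, φ t := by
  have := intervalIntegral.integral_Iic_sub_Iic (φ_integrable.integrableOn (s := Set.Iic 0))
    (φ_integrable.integrableOn (s := Set.Iic x))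
  unfold Phi φ c at *
  linarith [this]

lemma hasDerivAt_Phi (x : ℝ) : HasDerivAt Phi (φ x) x := by
  have h : HasDerivAt (fun u => ∫ t in (0:ℝ)..u, φ t) (φ x) x :=
    intervalIntegral.integral_hasDerivAt_right (φ_integrable.intervalIntegrable)
      φ_cont.aestronglyMeasurable.stronglyMeasurableAtFilter
      φ_cont.continuousAt
  have : Phi = fun u => Phi 0 + ∫ t in (0:ℝ)..u, φ t := funext Phi_eq
  rw [this]
  exact h.const_add _

lemma Phi_strictMono : StrictMono Phi := by
  have : ∀ x : ℝ, 0 < deriv Phi x := by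
    intro x; rw [(hasDerivAt_Phi x).deriv]; exact φ_pos x
  exact strictMono_of_deriv_pos this

lemma Phi_tendsto : Filter.Tendsto Phi Filter.atTop (nhds 1) := by
  have h := MeasureTheory.intervalIntegral_tendsto_integral_Ioi 0
    (φ_integrable.integrableOn (s := Set.Ioi 0)) Filter.tendsto_id
  have hsum : Phi 0 + ∫ t in Set.Ioi (0:ℝ), φ t = 1 := by
    have := intervalIntegral.integral_Iic_add_Ioi (φ_integrable.integrableOn (s := Set.Iic 0))
      (φ_integrable.integrableOn (s := Set.Ioi 0))
    unfold Phi φ c at *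
    rw [this]
    have h1 := φ_integral
    unfold φ c at h1
    exact h1
  have : Filter.Tendsto (fun x => Phi 0 + ∫ t in (0:ℝ)..x, φ t) Filter.atTop
      (nhds (Phi 0 + ∫ t in Set.Ioi (0:ℝ), φ t)) := (h.const_add _)
  rw [hsum] at this
  have he : Phi = fun x => Phi 0 + ∫ t in (0:ℝ)..x, φ t := funext Phi_eq
  rw [he]
  exact this

lemma Phi_le_one (x : ℝ) : Phi x ≤ 1 :=
  Monotone.ge_of_tendsto Phi_strictMono.monotone Phi_tendsto x

lemma Phi_lt_one (x : ℝ) : Phi x < 1 :=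
  lt_of_lt_of_le (Phi_strictMono (lt_add_one x)) (Phi_le_one _)

lemma exp_int (s t : ℝ) : ∫ z in s..t, c * Real.exp (-z) = c * (Real.exp (-s) - Real.exp (-t)) := by
  rw [intervalIntegral.integral_const_mul]
  congr 1
  have hd : ∀ x ∈ Set.uIcc s t, HasDerivAt (fun y => -Real.exp (-y)) (Real.exp (-x)) x := by
    intro x _
    have h1 : HasDerivAt (fun y : ℝ => -y) (-1) x := (hasDerivAt_id x).neg
    have h2 := h1.exp
    have h3 := h2.neg
    refine h3.congr_deriv ?_
    ring
  rw [intervalIntegral.integral_eq_sub_of_hasDerivAt hd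
    ((Real.continuous_exp.comp continuous_neg).intervalIntegrable s t)]
  ring

end Stmt9Aux

open Stmt9Aux

/-- for `θ > 0`, the function
`F(η) = η(Φ(η) − (1−ε)) − ∫_{a²/2}^{η²/2} (1/√(2π))e^{−z} dz − θ` with `a = Φ⁻¹(1−ε)`,
`ε ∈ (0,1/2)`, satisfies `F(a) = −θ < 0`, `F(η) → +∞` as `η → +∞`, has a unique root
`η* ∈ [a,∞)`; moreover any such root satisfies `η* > a`, so `ε′ = 1 − Φ(η*)` satisfies
`0 < ε′ < ε`. -/
theorem stmt_9 (ε θ a : ℝ) (hε : ε ∈ Set.Ioo (0:ℝ) (1/2)) (ha : Phi a = 1 - ε)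
    (hθ : 0 < θ)
    (F : ℝ → ℝ)
    (hF : ∀ η, F η = η * (Phi η - (1 - ε))
        - (∫ z in (a ^ 2 / 2)..(η ^ 2 / 2), (1 / Real.sqrt (2 * Real.pi)) * Real.exp (-z)) - θ) :
    (F a = -θ ∧ F a < 0) ∧
    Filter.Tendsto F Filter.atTop Filter.atTop ∧
    (∃! η : ℝ, η ∈ Set.Ici a ∧ F η = 0) ∧
    (∀ η, a ≤ η → F η = 0 → a < η ∧ 0 < 1 - Phi η ∧ 1 - Phi η < ε) := by
  obtain ⟨hε0, hε2⟩ := hε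
  -- closed form of F
  have hFc : ∀ η, F η = η * (Phi η - (1 - ε))
      - c * (Real.exp (-(a ^ 2 / 2)) - Real.exp (-(η ^ 2 / 2))) - θ := by
    intro η
    rw [hF η, ← exp_int (a ^ 2 / 2) (η ^ 2 / 2)]
    rfl
  -- F a
  have hFa : F a = -θ := by
    rw [hFc a, ha]; ring
  have hFa' : F a < 0 := by rw [hFa]; linarith
  -- derivative of F
  have hderiv : ∀ x : ℝ, HasDerivAt F (Phi x - (1 - ε)) x := by
    intro x
    have hFe : F = fun η => η * (Phi η - (1 - ε))
        - c * (Real.exp (-(a ^ 2 / 2)) - Real.exp (-(η ^ 2 / 2))) - θ := funext hFc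
    rw [hFe]
    have h1 : HasDerivAt (fun η : ℝ => η * (Phi η - (1 - ε)))
        (1 * (Phi x - (1 - ε)) + x * φ x) x :=
      (hasDerivAt_id x).mul ((hasDerivAt_Phi x).sub_const _)
    have h2 : HasDerivAt (fun η : ℝ => Real.exp (-(η ^ 2 / 2)))
        (Real.exp (-(x ^ 2 / 2)) * -(2 * x ^ 1 / 2)) x :=
      (((hasDerivAt_pow 2 x).div_const 2).neg).exp
    have h3 : HasDerivAt (fun η : ℝ => c * (Real.exp (-(a ^ 2 / 2)) - Real.exp (-(η ^ 2 / 2))))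
        (c * (0 - Real.exp (-(x ^ 2 / 2)) * -(2 * x ^ 1 / 2))) x :=
      (((hasDerivAt_const x _).sub h2)).const_mul c
    have h4 := (h1.sub h3).sub_const θ
    refine h4.congr_deriv ?_
    unfold φ
    ring
  have hcont : Continuous F := by
    have : Differentiable ℝ F := fun x => (hderiv x).differentiableAt
    exact this.continuous
  -- strict monotonicity on Ici a
  have hmono : StrictMonoOn F (Set.Ici a) := by
    apply strictMonoOn_of_deriv_pos (convex_Ici a) hcont.continuousOn
    intro x hx
    rw [interior_Ici] at hx
    rw [(hderiv x).deriv]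
    have : Phi a < Phi x := Phi_strictMono hx
    rw [ha] at this
    linarith
  -- tendsto atTop
  have htend : Filter.Tendsto F Filter.atTop Filter.atTop := by
    have hbd : ∀ᶠ η in Filter.atTop,
        η * (ε / 2) - (c * Real.exp (-(a ^ 2 / 2)) + θ) ≤ F η := by
      have h1 : ∀ᶠ η in Filter.atTop, 1 - ε / 2 < Phi η :=
        Phi_tendsto.eventually (eventually_gt_nhds (by linarith))
      filter_upwards [h1, Filter.eventually_ge_atTop (0:ℝ)] with η hη hη0
      rw [hFc η]
      have hexp : 0 ≤ c * Real.exp (-(η ^ 2 / 2)) :=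
        le_of_lt (mul_pos c_pos (Real.exp_pos _))
      have : η * (ε / 2) ≤ η * (Phi η - (1 - ε)) := by
        apply mul_le_mul_of_nonneg_left _ hη0
        linarith
      nlinarith
    have h2 : Filter.Tendsto (fun η : ℝ => η * (ε / 2) - (c * Real.exp (-(a ^ 2 / 2)) + θ))
        Filter.atTop Filter.atTop := by
      apply Filter.tendsto_atTop_add_const_right
      exact Filter.tendsto_id.atTop_mul_const (by linarith)
    exact Filter.tendsto_atTop_mono' _ hbd h2
  -- existence of root
  obtain ⟨b, hb0, hab⟩ :=
    ((htend.eventually_gt_atTop 0).and (Filter.eventually_ge_atTop a)).exists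
  have hmem : (0:ℝ) ∈ Set.Icc (F a) (F b) := ⟨le_of_lt hFa', le_of_lt hb0⟩
  obtain ⟨η₀, hη₀mem, hη₀⟩ := intermediate_value_Icc hab hcont.continuousOn hmem
  -- final clause helper
  have hlast : ∀ η, a ≤ η → F η = 0 → a < η ∧ 0 < 1 - Phi η ∧ 1 - Phi η < ε := by
    intro η hη hFη
    have hne : a ≠ η := by
      intro h; rw [← h] at hFη; rw [hFa] at hFη; linarith
    have haη : a < η := lt_of_le_of_ne hη hne
    refine ⟨haη, by linarith [Phi_lt_one η], ?_⟩
    have : Phi a < Phi η := Phi_strictMono haη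
    rw [ha] at this
    linarith
  refine ⟨⟨hFa, hFa'⟩, htend, ⟨η₀, ⟨hη₀mem.1, hη₀⟩, ?_⟩, hlast⟩
  rintro y ⟨hy1, hy2⟩
  exact hmono.injOn hy1 hη₀mem.1 (by rw [hy2, hη₀])
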